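/- Let $A$ be a real $n \times m$ matrix with $m \ge n$. For indices $i_1,\dots,i_n \in \{1,\dots,m\}$ let $[A]_{i_1\cdots i_n}$ denote the $n \times n$ matrix whose $k$-th column is column $i_k$ of $A$. Then $\sum_{i_1,\dots,i_n=1}^m |\det [A]_{i_1\cdots i_n}|^2 = \frac{n!}{n^n}\left(\inf_{M \in \mathrm{SL}(n,\mathbb{R})} \|MA\|_F^2\right)^n$, where $\|B\|_F^2 = \sum_{j,i}|B_{ji}|^2$ is the squared Frobenius norm. -/

import Mathlib

open Matrix Equiv

lemma cb (n m : ℕ) (A : Matrix (Fin n) (Fin m) ℝ) :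
    ∑ i : Fin n → Fin m, (A.submatrix id i).det ^ 2 =
      (n.factorial : ℝ) * (A * Aᵀ).det := by
  have key : ∀ i : Fin n → Fin m, (A.submatrix id i).det ^ 2 =
      ∑ σ : Perm (Fin n), ∑ τ : Perm (Fin n),
        (Perm.sign σ : ℝ) * (Perm.sign τ : ℝ) *
          ∏ k, (A (σ k) (i k) * A (τ k) (i k)) := by
    intro i
    rw [Matrix.det_apply', sq, Finset.sum_mul_sum]
    refine Finset.sum_congr rfl fun σ _ => Finset.sum_congr rfl fun τ _ => ?_
    simp only [submatrix_apply, id_eq]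
    rw [Finset.prod_mul_distrib]
    ring
  simp only [key]
  rw [Finset.sum_comm]
  have swap2 : ∀ σ : Perm (Fin n),
      (∑ i : Fin n → Fin m, ∑ τ : Perm (Fin n),
        (Perm.sign σ : ℝ) * (Perm.sign τ : ℝ) * ∏ k, (A (σ k) (i k) * A (τ k) (i k)))
      = ∑ τ : Perm (Fin n), (Perm.sign σ : ℝ) * (Perm.sign τ : ℝ) *
          ∏ k, (A * Aᵀ) (σ k) (τ k) := by
    intro σ
    rw [Finset.sum_comm]
    refine Finset.sum_congr rfl fun τ _ => ?_
    rw [← Finset.mul_sum]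
    congr 1
    have hps := Finset.prod_univ_sum (fun _ : Fin n => (Finset.univ : Finset (Fin m)))
      (fun k j => A (σ k) j * A (τ k) j)
    rw [← Fintype.piFinset_univ, ← hps]
    refine Finset.prod_congr rfl fun k _ => ?_
    rw [mul_apply]
    simp [transpose_apply]
  simp only [swap2]
  have inner : ∀ σ : Perm (Fin n),
      (∑ τ : Perm (Fin n), (Perm.sign σ : ℝ) * (Perm.sign τ : ℝ) *
        ∏ k, (A * Aᵀ) (σ k) (τ k)) = (A * Aᵀ).det := by
    intro σ
    rw [← Equiv.sum_comp (Equiv.mulRight σ)]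
    have : ∀ ρ : Perm (Fin n),
        (Perm.sign σ : ℝ) * (Perm.sign (ρ * σ) : ℝ) * ∏ k, (A * Aᵀ) (σ k) ((ρ * σ) k)
        = (Perm.sign ρ : ℝ) * ∏ k, (A * Aᵀ)ᵀ (ρ k) k := by
      intro ρ
      have h1 : ∏ k, (A * Aᵀ) (σ k) ((ρ * σ) k) = ∏ k, (A * Aᵀ)ᵀ (ρ k) k := by
        rw [← Equiv.prod_comp σ (fun k => (A * Aᵀ)ᵀ (ρ k) k)]
        simp [Perm.mul_apply]
      have h2 : (Perm.sign (ρ * σ) : ℝ) = (Perm.sign ρ : ℝ) * (Perm.sign σ : ℝ) := by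
        simp [Perm.sign_mul]
      rw [h1, h2]
      rcases Int.units_eq_one_or (Perm.sign σ) with h | h <;> rw [h] <;> push_cast <;> ring
    simp only [Equiv.coe_mulRight, this]
    rw [← Matrix.det_apply', det_transpose]
  simp only [inner, Finset.sum_const, Finset.card_univ, Fintype.card_perm, nsmul_eq_mul,
    Fintype.card_fin]

lemma trace_eig (n : ℕ) (B : Matrix (Fin n) (Fin n) ℝ) (hB : B.IsHermitian) :
    B.trace = ∑ i, hB.eigenvalues i := by
  nth_rewrite 1 [hB.spectral_theorem]
  rw [Unitary.conjStarAlgAut_apply, Matrix.trace_mul_cycle, (Matrix.mem_unitaryGroup_iff').mp (hB.eigenvectorUnitary).2,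
    one_mul, Matrix.trace_diagonal]
  simp

lemma frob (n m : ℕ) (C : Matrix (Fin n) (Fin m) ℝ) :
    ∑ j, ∑ i, (C j i)^2 = (C * Cᵀ).trace := by
  rw [Matrix.trace]
  refine Finset.sum_congr rfl fun j _ => ?_
  rw [Matrix.diag_apply, mul_apply]
  refine Finset.sum_congr rfl fun i _ => ?_
  simp [sq]

lemma amgm (n : ℕ) (hn : 0 < n) (l : Fin n → ℝ) (hl : ∀ i, 0 ≤ l i) :
    (n : ℝ) * (∏ i, l i) ^ ((n:ℝ)⁻¹) ≤ ∑ i, l i := by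
  have hn' : (0:ℝ) < n := by exact_mod_cast hn
  have h := Real.geom_mean_le_arith_mean_weighted Finset.univ (fun _ => (n:ℝ)⁻¹) l
    (fun i _ => by positivity) (by simp [Finset.card_univ]; field_simp) (fun i _ => hl i)
  rw [Real.finset_prod_rpow _ l (fun i _ => hl i) ((n:ℝ)⁻¹)] at h
  calc (n : ℝ) * (∏ i, l i) ^ ((n:ℝ)⁻¹) ≤ (n:ℝ) * ∑ i, (n:ℝ)⁻¹ * l i :=
        mul_le_mul_of_nonneg_left h (le_of_lt hn')
    _ = ∑ i, l i := by rw [← Finset.mul_sum]; field_simp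

lemma lower' (n : ℕ) (hn : 0 < n) (B M : Matrix (Fin n) (Fin n) ℝ)
    (hB : B.PosSemidef) (hM : M.det = 1) :
    (n : ℝ) * B.det ^ ((n:ℝ)⁻¹) ≤ (M * B * Mᵀ).trace := by
  have hS : (M * B * Mᵀ).PosSemidef := by
    have := hB.mul_mul_conjTranspose_same M
    simpa using this
  have hdet : (M * B * Mᵀ).det = B.det := by
    rw [det_mul, det_mul, det_transpose, hM]
    ring
  have heig : (M * B * Mᵀ).det = ∏ i, hS.1.eigenvalues i := by
    simpa using hS.1.det_eq_prod_eigenvalues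
  rw [trace_eig _ _ hS.1, ← hdet, heig]
  exact amgm n hn _ hS.eigenvalues_nonneg

open scoped MatrixOrder in
lemma upper_pos (n : ℕ) (hn : 0 < n) (B : Matrix (Fin n) (Fin n) ℝ)
    (hB : B.PosSemidef) (hd : 0 < B.det) :
    ∃ M : Matrix (Fin n) (Fin n) ℝ, M.det = 1 ∧
      (M * B * Mᵀ).trace = (n : ℝ) * B.det ^ ((n:ℝ)⁻¹) := by
  set S := CFC.sqrt B with hSdef
  have hS : S.PosSemidef := (CFC.sqrt_nonneg B).posSemidef
  have hSt : Sᵀ = S := by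
    have := hS.1
    simpa [Matrix.IsHermitian] using this
  have hSS : S * S = B := CFC.sqrt_mul_sqrt_self B hB.nonneg
  have hdetS2 : S.det * S.det = B.det := by rw [← det_mul, hSS]
  have hdetSnn : 0 ≤ S.det := by
    rw [hS.1.det_eq_prod_eigenvalues]
    exact Finset.prod_nonneg fun i _ => by simpa using hS.eigenvalues_nonneg i
  have hdetS : S.det = Real.sqrt B.det := by
    rw [← hdetS2, Real.sqrt_mul_self hdetSnn]
  have hdetSpos : 0 < S.det := by
    rw [hdetS]; exact Real.sqrt_pos.mpr hd
  set r := B.det ^ ((n:ℝ)⁻¹) with hrdef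
  have hrpos : 0 < r := Real.rpow_pos_of_pos hd _
  have hrn : r ^ n = B.det := by
    rw [hrdef, ← Real.rpow_natCast (B.det ^ ((n:ℝ)⁻¹)) n, ← Real.rpow_mul hd.le]
    rw [inv_mul_cancel₀ (by exact_mod_cast hn.ne' : (n:ℝ) ≠ 0), Real.rpow_one]
  set c := Real.sqrt r with hcdef
  have hcn : c ^ n = Real.sqrt B.det := by
    have h1 : (c ^ n) ^ 2 = B.det := by
      rw [← pow_mul, mul_comm n 2, pow_mul, hcdef, Real.sq_sqrt hrpos.le, hrn]
    rw [← h1, Real.sqrt_sq (by positivity)]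
  have hSunit : IsUnit S.det := hdetSpos.ne'.isUnit
  refine ⟨c • S⁻¹, ?_, ?_⟩
  · rw [det_smul, det_nonsing_inv, hdetS, Fintype.card_fin, hcn]
    rw [Ring.inverse_eq_inv']
    field_simp [Real.sqrt_ne_zero'.mpr hd]
  · have hmid : S⁻¹ * B * S⁻¹ = 1 := by
      rw [← hSS, ← mul_assoc, Matrix.nonsing_inv_mul S hSunit, Matrix.mul_assoc,
        Matrix.mul_nonsing_inv S hSunit, one_mul]
    have : (c • S⁻¹) * B * (c • S⁻¹)ᵀ = (c * c) • (1 : Matrix (Fin n) (Fin n) ℝ) := by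
      rw [transpose_smul, transpose_nonsing_inv, hSt, Matrix.smul_mul, Matrix.smul_mul,
        Matrix.mul_smul, hmid, smul_smul]
    rw [this, trace_smul, trace_one, Fintype.card_fin, hcdef, Real.mul_self_sqrt hrpos.le]
    simp [mul_comm]

lemma upper_zero (n : ℕ) (hn : 0 < n) (B : Matrix (Fin n) (Fin n) ℝ)
    (hB : B.PosSemidef) (hd : B.det = 0) (ε : ℝ) (hε : 0 < ε) :
    ∃ M : Matrix (Fin n) (Fin n) ℝ, M.det = 1 ∧ (M * B * Mᵀ).trace ≤ ε := by
  set l := hB.1.eigenvalues with hldef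
  have hlnn : ∀ i, 0 ≤ l i := hB.eigenvalues_nonneg
  obtain ⟨k, -, hk⟩ : ∃ k ∈ Finset.univ, l k = 0 := by
    rw [← Finset.prod_eq_zero_iff]
    rw [← hd, hB.1.det_eq_prod_eigenvalues]
    simp [hldef]
  set U := (hB.1.eigenvectorUnitary : Matrix (Fin n) (Fin n) ℝ) with hUdef
  set P := star U with hPdef
  have hPU : P * U = 1 := (Matrix.mem_unitaryGroup_iff').mp hB.1.eigenvectorUnitary.2
  have hUP : U * P = 1 := (Matrix.mem_unitaryGroup_iff).mp hB.1.eigenvectorUnitary.2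
  have hPt : Pᵀ = U := by
    rw [hPdef]
    simp [star_eq_conjTranspose]
  have hPBP : P * B * Pᵀ = diagonal l := by
    rw [hPt]
    nth_rewrite 1 [hB.1.spectral_theorem]
    rw [Unitary.conjStarAlgAut_apply, ← hUdef, ← hPdef, ← Matrix.mul_assoc, ← Matrix.mul_assoc, hPU, one_mul,
      Matrix.mul_assoc, hPU, mul_one]
    simp [hldef]
  have hdetP : P.det * P.det = 1 := by
    have : (P * Pᵀ).det = 1 := by rw [hPt, hPU, det_one]
    rw [det_mul, det_transpose] at this
    exact this
  set T := ∑ i, l i with hTdef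
  have hTnn : 0 ≤ T := Finset.sum_nonneg fun i _ => hlnn i
  set t := Real.sqrt (T / ε + 1) with htdef
  have ht2 : t ^ 2 = T / ε + 1 := Real.sq_sqrt (by positivity)
  have ht : 0 < t := Real.sqrt_pos.mpr (by positivity)
  set d := Function.update (fun _ : Fin n => t⁻¹) k (P.det * t ^ (n-1)) with hddef
  refine ⟨diagonal d * P, ?_, ?_⟩
  · rw [det_mul, det_diagonal, hddef,
      Finset.prod_update_of_mem (Finset.mem_univ k), Finset.prod_const]
    have hcard : ((Finset.univ : Finset (Fin n)) \ {k}).card = n - 1 := by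
      rw [Finset.card_sdiff_of_subset (Finset.subset_univ {k})]
      simp
    rw [hcard]
    have htt : t ^ (n-1) * t⁻¹ ^ (n-1) = 1 := by
      rw [← mul_pow, mul_inv_cancel₀ ht.ne', one_pow]
    calc P.det * t ^ (n - 1) * t⁻¹ ^ (n - 1) * P.det
        = (t ^ (n-1) * t⁻¹ ^ (n-1)) * (P.det * P.det) := by ring
      _ = 1 := by rw [htt, hdetP, one_mul]
  · have hMt : (diagonal d * P)ᵀ = Pᵀ * diagonal d := by
      rw [transpose_mul, diagonal_transpose]
    have hprod : diagonal d * P * B * (diagonal d * P)ᵀ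
        = diagonal (fun i => d i * l i * d i) := by
      rw [hMt]
      calc diagonal d * P * B * (Pᵀ * diagonal d)
          = diagonal d * (P * B * Pᵀ) * diagonal d := by
            simp only [Matrix.mul_assoc]
        _ = diagonal (fun i => d i * l i * d i) := by
            rw [hPBP, diagonal_mul_diagonal, diagonal_mul_diagonal]
    rw [hprod, trace_diagonal]
    have heach : ∀ i, d i * l i * d i = l i * (t^2)⁻¹ := by
      intro i
      by_cases hik : i = k
      · subst hik; rw [hk]; ring
      · rw [hddef, Function.update_of_ne hik]
        simp [sq]
        ring
    rw [Finset.sum_congr rfl fun i _ => heach i, ← Finset.sum_mul, ← hTdef, ht2]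
    rw [mul_inv_le_iff₀ (by positivity)]
    have : ε * (T / ε + 1) = T + ε := by field_simp
    rw [this]
    linarith

theorem stmt3 (n m : ℕ) (hnm : n ≤ m) (A : Matrix (Fin n) (Fin m) ℝ) :
    ∑ i : Fin n → Fin m, (A.submatrix id i).det ^ 2 =
      ((n.factorial : ℝ) / n ^ n) *
        (⨅ M : Matrix.SpecialLinearGroup (Fin n) ℝ,
          ∑ j : Fin n, ∑ i : Fin m, (((M : Matrix (Fin n) (Fin n) ℝ) * A) j i) ^ 2) ^ n := by
  rcases Nat.eq_zero_or_pos n with hn0 | hn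
  · subst hn0
    simp [Matrix.det_fin_zero, ciInf_const]
  · set B := A * Aᵀ with hBdef
    have hB : B.PosSemidef := by
      have := posSemidef_self_mul_conjTranspose A
      simpa [hBdef] using this
    have hBd0 : 0 ≤ B.det := by
      rw [hB.1.det_eq_prod_eigenvalues]
      exact Finset.prod_nonneg fun i _ => by simpa using hB.eigenvalues_nonneg i
    set r := B.det ^ ((n:ℝ)⁻¹) with hrdef
    have hnR : (n:ℝ) ≠ 0 := by exact_mod_cast hn.ne'
    have hrn : r ^ n = B.det := by
      rw [hrdef, ← Real.rpow_natCast (B.det ^ ((n:ℝ)⁻¹)) n, ← Real.rpow_mul hBd0,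
        inv_mul_cancel₀ hnR, Real.rpow_one]
    set F := fun M : Matrix.SpecialLinearGroup (Fin n) ℝ =>
      ∑ j : Fin n, ∑ i : Fin m, (((M : Matrix (Fin n) (Fin n) ℝ) * A) j i) ^ 2 with hFdef
    have hF : ∀ M : Matrix.SpecialLinearGroup (Fin n) ℝ,
        F M = ((M : Matrix (Fin n) (Fin n) ℝ) * B * (M : Matrix (Fin n) (Fin n) ℝ)ᵀ).trace := by
      intro M
      rw [hFdef]
      simp only
      rw [frob]
      congr 1
      rw [hBdef, transpose_mul]
      simp only [Matrix.mul_assoc]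
    have hlow : ∀ M : Matrix.SpecialLinearGroup (Fin n) ℝ, (n:ℝ) * r ≤ F M := by
      intro M
      rw [hF]
      exact lower' n hn B _ hB M.2
    have hbdd : BddBelow (Set.range F) := ⟨(n:ℝ) * r, by
      rintro x ⟨M, rfl⟩; exact hlow M⟩
    have hinf : (⨅ M, F M) = (n:ℝ) * r := by
      refine le_antisymm ?_ (le_ciInf hlow)
      rcases eq_or_lt_of_le hBd0 with hz | hpos
      · have hr0 : r = 0 := by
          rw [hrdef, ← hz, Real.zero_rpow (inv_ne_zero hnR)]
        rw [hr0, mul_zero]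
        refine le_of_forall_pos_le_add fun ε hε => ?_
        obtain ⟨M, hM1, hM2⟩ := upper_zero n hn B hB hz.symm ε hε
        calc (⨅ M, F M) ≤ F ⟨M, hM1⟩ := ciInf_le hbdd _
          _ ≤ ε := by rw [hF ⟨M, hM1⟩]; exact hM2
          _ = 0 + ε := (zero_add ε).symm
      · obtain ⟨M, hM1, hM2⟩ := upper_pos n hn B hB hpos
        calc (⨅ M, F M) ≤ F ⟨M, hM1⟩ := ciInf_le hbdd _
          _ = (n:ℝ) * r := by rw [hF ⟨M, hM1⟩]; exact hM2
    rw [cb n m A, ← hBdef, hinf, mul_pow, hrn]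
    have hpn : ((n:ℝ)) ^ n ≠ 0 := pow_ne_zero _ hnR
    field_simp
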